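/- arXiv:1403.7973 — 2 statements merged into one kernel-verified Lean document; each statement's English description precedes it below -/
import Mathlib

section
/- For x > 0, real θ, and real a > 0, the integral ∫_0^∞ e^{-πxτ² - 2πkωτ} sinh(2πaωτ) dτ, where ω = e^{-πi/4} and k is a positive integer, equals (1/(4√x))·{E(k-a) - E(k+a)}, where E(t) = e^{-πit²/x} erfc(ω t √(π/x)). -/
open MeasureTheory

noncomputable def cerf (z : ℂ) : ℂ :=
  (2 / Real.sqrt Real.pi) * ∫ t in (0:ℝ)..1, z * Complex.exp (-((t : ℂ) * z) ^ 2)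

noncomputable def cerfc (z : ℂ) : ℂ := 1 - cerf z

noncomputable def Efun (x t : ℝ) : ℂ :=
  Complex.exp (-(Real.pi : ℂ) * Complex.I * (t : ℂ) ^ 2 / (x : ℂ)) *
    cerfc (Complex.exp (-(Real.pi : ℂ) * Complex.I / 4) * (t : ℂ) *
      (Real.sqrt (Real.pi / x) : ℂ))

/-- `ω = e^{-πi/4}`. -/
noncomputable def omg : ℂ := Complex.exp (-(Real.pi : ℂ) * Complex.I / 4)

open MeasureTheory Complex Real Set Filter

lemma omg_eq : omg = ((Real.sqrt 2 / 2 : ℝ) : ℂ) - ((Real.sqrt 2 / 2 : ℝ) : ℂ) * Complex.I := by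
  have h : -(Real.pi : ℂ) * Complex.I / 4 = ((-(Real.pi/4) : ℝ) : ℂ) * Complex.I := by
    push_cast; ring
  rw [omg, h, Complex.exp_mul_I, ← Complex.ofReal_cos, ← Complex.ofReal_sin]
  rw [Real.cos_neg, Real.sin_neg, Real.cos_pi_div_four, Real.sin_pi_div_four]
  push_cast; ring

lemma omg_sq : omg ^ 2 = -Complex.I := by
  have h2 : ((Real.sqrt 2 : ℝ) : ℂ) ^ 2 = 2 := by
    norm_cast
    exact Real.sq_sqrt (by norm_num)
  rw [omg_eq]
  push_cast
  linear_combination (-(Complex.I)/2) * h2 + (((Real.sqrt 2:ℝ):ℂ)^2/4) * Complex.I_sq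

lemma omg_norm : ‖omg‖ = 1 := by
  rw [omg, Complex.norm_exp]
  norm_num

lemma sq_re_im (s y : ℝ) :
    ((s : ℂ) + (y : ℂ) * omg) ^ 2 =
      ((s^2 + Real.sqrt 2 * s * y : ℝ) : ℂ)
        + ((-(Real.sqrt 2 * s * y) - y^2 : ℝ) : ℂ) * Complex.I := by
  have h2 : ((Real.sqrt 2 : ℝ) : ℂ) ^ 2 = 2 := by
    norm_cast
    exact Real.sq_sqrt (by norm_num)
  rw [omg_eq]
  push_cast
  linear_combination (-((y:ℂ)^2)*Complex.I/2) * h2 + ((y:ℂ)^2*((Real.sqrt 2:ℝ):ℂ)^2/4) * Complex.I_sq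

lemma norm_cexp_neg_sq (s y : ℝ) :
    ‖Complex.exp (-((s : ℂ) + (y : ℂ) * omg) ^ 2)‖ =
      Real.exp (-(s^2 + Real.sqrt 2 * s * y)) := by
  have h : (-(((s : ℂ) + (y : ℂ) * omg) ^ 2)).re = -(s^2 + Real.sqrt 2 * s * y) := by
    rw [sq_re_im]; simp [pow_two, Complex.mul_im, Complex.mul_re]
  rw [Complex.norm_exp, h]



lemma int_base (C : ℝ) : Integrable (fun u : ℝ => (|u| + C) * Real.exp (-u^2)) := by
  have h1 : Integrable (fun u : ℝ => |u| * Real.exp (-u^2)) := by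
    refine (integrable_mul_exp_neg_mul_sq (b := 1) one_pos).abs.congr (ae_of_all _ fun u => ?_)
    show |u * Real.exp (-1*u^2)| = |u| * Real.exp (-u^2)
    rw [abs_mul, abs_of_pos (Real.exp_pos _), neg_one_mul]
  have h2 : Integrable (fun u : ℝ => C * Real.exp (-u^2)) := by
    refine ((integrable_exp_neg_mul_sq (b := 1) one_pos).const_mul C).congr (ae_of_all _ fun u => ?_)
    show C * Real.exp (-1*u^2) = C * Real.exp (-u^2)
    rw [neg_one_mul]
  refine (h1.add h2).congr (ae_of_all _ fun u => ?_)
  simp only [Pi.add_apply]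
  ring

lemma int_aux (A B : ℝ) : Integrable (fun s : ℝ => (|s| + A) * Real.exp (-s^2 + B*s)) := by
  have hg : Integrable (fun u : ℝ => (|u + B/2| + A) * Real.exp (-u^2)) := by
    refine (int_base (|B|/2 + |A|)).mono' ?_ (ae_of_all _ fun u => ?_)
    · exact (Continuous.aestronglyMeasurable (by fun_prop))
    · rw [Real.norm_eq_abs, abs_mul, abs_of_pos (Real.exp_pos _)]
      have h1 : |(|u + B/2| + A)| ≤ |u| + (|B|/2 + |A|) := by
        calc |(|u + B/2| + A)| ≤ |(|u + B/2|)| + |A| := abs_add_le _ _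
          _ = |u + B/2| + |A| := by rw [_root_.abs_abs]
          _ ≤ (|u| + |B/2|) + |A| := by gcongr; exact abs_add_le _ _
          _ = |u| + (|B|/2 + |A|) := by rw [abs_div]; simp; ring
      exact mul_le_mul_of_nonneg_right h1 (Real.exp_pos _).le
  have hg2 : Integrable (fun s : ℝ => (|s - B/2 + B/2| + A) * Real.exp (-(s - B/2)^2)) :=
    hg.comp_sub_right (B/2)
  refine (hg2.const_mul (Real.exp (B^2/4))).congr (ae_of_all _ fun s => ?_)
  have h3 : s - B/2 + B/2 = s := by ring
  show Real.exp (B^2/4) * ((|s - B/2 + B/2| + A) * Real.exp (-(s - B/2)^2))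
      = (|s| + A) * Real.exp (-s^2 + B*s)
  rw [h3, ← mul_assoc, mul_comm (Real.exp (B^2/4)), mul_assoc, ← Real.exp_add]
  congr 2
  ring

lemma cont_cexp (y : ℝ) : Continuous fun s : ℝ => Complex.exp (-((s:ℂ) + (y:ℂ)*omg)^2) :=
  Complex.continuous_exp.comp (((Complex.continuous_ofReal.add continuous_const).pow 2).neg)

lemma intF (y : ℝ) :
    IntegrableOn (fun s : ℝ => Complex.exp (-((s:ℂ) + (y:ℂ)*omg)^2)) (Ioi (0:ℝ)) := by
  have h1 : (fun s : ℝ => Complex.exp (-((s:ℂ) + (y:ℂ)*omg)^2))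
      = fun s : ℝ => Complex.exp (-(1:ℂ)*(s:ℂ)^2 + (-2*(y:ℂ)*omg)*(s:ℂ) + (-(y:ℂ)^2*omg^2)) := by
    funext s; congr 1; ring
  rw [h1]
  exact (integrable_cexp_quadratic (by norm_num) _ _).integrableOn

lemma tendsto_exp_quad (B : ℝ) :
    Tendsto (fun s : ℝ => Real.exp (-s^2 + B*s)) atTop (nhds 0) := by
  have h2 : Tendsto (fun s : ℝ => s * (s - B)) atTop atTop :=
    tendsto_id.atTop_mul_atTop₀ (tendsto_atTop_add_const_right atTop (-B) tendsto_id)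
  have h3 : Tendsto (fun s : ℝ => -s^2 + B*s) atTop atBot := by
    have := tendsto_neg_atTop_atBot.comp h2
    refine this.congr fun s => ?_
    simp only [Function.comp]; ring
  exact Real.tendsto_exp_atBot.comp h3

lemma neg_sq_omg (r : ℝ) : -(((0:ℝ):ℂ) + (r:ℂ)*omg)^2 = Complex.I * (r:ℂ)^2 := by
  push_cast
  linear_combination (-(r:ℂ)^2) * omg_sq

lemma hasDeriv_inner (c : ℂ) (s : ℝ) :
    HasDerivAt (fun s : ℝ => Complex.exp (-((s:ℂ) + c)^2))
      (-2*((s:ℂ) + c) * Complex.exp (-((s:ℂ) + c)^2)) s := by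
  have h1 : HasDerivAt (fun w : ℂ => (w + c)) 1 (s:ℂ) := (hasDerivAt_id _).add_const c
  have h2 := ((h1.fun_pow 2).fun_neg).cexp
  have h3 : HasDerivAt (fun w : ℂ => Complex.exp (-((w + c))^2))
      (-2*((s:ℂ) + c) * Complex.exp (-((s:ℂ) + c)^2)) (s:ℂ) := by
    exact h2.congr_deriv (by ring)
  exact h3.comp_ofReal

lemma FTC_Ioi (r : ℝ) :
    ∫ s in Ioi (0:ℝ), (-2*((s:ℂ) + (r:ℂ)*omg) * Complex.exp (-((s:ℂ) + (r:ℂ)*omg)^2))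
      = -Complex.exp (Complex.I * (r:ℂ)^2) := by
  have key := integral_Ioi_of_hasDerivAt_of_tendsto'
    (f := fun s : ℝ => Complex.exp (-((s:ℂ) + (r:ℂ)*omg)^2))
    (f' := fun s : ℝ => -2*((s:ℂ) + (r:ℂ)*omg) * Complex.exp (-((s:ℂ) + (r:ℂ)*omg)^2))
    (a := 0) (m := 0)
    (fun s _ => hasDeriv_inner ((r:ℂ)*omg) s)
    ?_ ?_
  · rw [key]
    show (0:ℂ) - Complex.exp (-((((0:ℝ)):ℂ) + (r:ℂ)*omg)^2) = -Complex.exp (Complex.I * (r:ℂ)^2)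
    rw [neg_sq_omg, zero_sub]
  · -- integrability of f'
    refine ((int_aux |r| (-(Real.sqrt 2) * r)).const_mul 2).integrableOn.mono'
      (Continuous.aestronglyMeasurable (by fun_prop)) (ae_of_all _ fun s => ?_)
    rw [norm_mul, norm_mul, norm_cexp_neg_sq]
    have h1 : ‖(-2 : ℂ)‖ = 2 := by norm_num
    have h2 : ‖(s:ℂ) + (r:ℂ)*omg‖ ≤ |s| + |r| := by
      refine (norm_add_le _ _).trans ?_
      simp [omg_norm]
    have h3 : Real.exp (-(s^2 + Real.sqrt 2 * s * r)) = Real.exp (-s^2 + (-(Real.sqrt 2)*r)*s) := by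
      congr 1; ring
    rw [h1, h3]
    have h4 : (0:ℝ) ≤ Real.exp (-s^2 + (-(Real.sqrt 2)*r)*s) := (Real.exp_pos _).le
    nlinarith [norm_nonneg ((s:ℂ) + (r:ℂ)*omg), abs_nonneg s, abs_nonneg r]
  · -- tendsto 0
    rw [tendsto_zero_iff_norm_tendsto_zero]
    have heq : ∀ s : ℝ, ‖Complex.exp (-((s:ℂ) + (r:ℂ)*omg)^2)‖
        = Real.exp (-s^2 + (-(Real.sqrt 2 * r))*s) := by
      intro s
      rw [norm_cexp_neg_sq]
      congr 1; ring
    exact (tendsto_exp_quad _).congr fun s => (heq s).symm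



set_option maxHeartbeats 1000000 in
lemma hasDerivF (r : ℝ) :
    HasDerivAt (fun y : ℝ => ∫ s in Ioi (0:ℝ), Complex.exp (-((s:ℂ) + (y:ℂ)*omg)^2))
      (-omg * Complex.exp (Complex.I * (r:ℂ)^2)) r := by
  have h40 : (0:ℝ) < 1 := one_pos
  set F' : ℝ → ℝ → ℂ :=
    fun y s => (-2*omg*((s:ℂ)+(y:ℂ)*omg)) * Complex.exp (-((s:ℂ)+(y:ℂ)*omg)^2) with hF'
  set R : ℝ := |r| + 1 with hR
  set bound : ℝ → ℝ := fun s => 2 * ((|s| + R) * Real.exp (-s^2 + (Real.sqrt 2 * R)*s)) with hbd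
  have hbound_int : Integrable bound (volume.restrict (Ioi (0:ℝ))) :=
    ((int_aux R (Real.sqrt 2 * R)).const_mul 2).restrict
  have hmeas : ∀ᶠ (y : ℝ) in nhds r, AEStronglyMeasurable
      (fun s : ℝ => Complex.exp (-((s:ℂ)+(y:ℂ)*omg)^2)) (volume.restrict (Ioi (0:ℝ))) :=
    Filter.Eventually.of_forall fun (y:ℝ) => (cont_cexp y).aestronglyMeasurable
  have h'meas : AEStronglyMeasurable (F' r) (volume.restrict (Ioi (0:ℝ))) :=
    Continuous.aestronglyMeasurable (by rw [hF']; fun_prop)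
  have hbnd : ∀ᵐ s ∂(volume.restrict (Ioi (0:ℝ))), ∀ y ∈ Metric.ball r 1, ‖F' y s‖ ≤ bound s := by
    rw [ae_restrict_iff' measurableSet_Ioi]
    refine Filter.Eventually.of_forall fun s hs => fun y hy => ?_
    have hs0 : (0:ℝ) < s := hs
    have hyR : |y| ≤ R := by
      rw [Metric.mem_ball, Real.dist_eq] at hy
      rw [hR]
      linarith [abs_sub_abs_le_abs_sub y r, hy.le]
    rw [hF', hbd]
    simp only []
    rw [norm_mul, norm_mul, norm_cexp_neg_sq]
    have h2 : ‖(s:ℂ) + (y:ℂ)*omg‖ ≤ |s| + R := by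
      refine (norm_add_le _ _).trans ?_
      simp only [norm_mul, Complex.norm_real, Real.norm_eq_abs, omg_norm, mul_one]
      linarith [hyR]
    have h25 : ‖(-2 : ℂ) * omg‖ = 2 := by
      rw [norm_mul]
      simp [omg_norm]
    have h3 : Real.exp (-(s^2 + Real.sqrt 2 * s * y)) ≤ Real.exp (-s^2 + (Real.sqrt 2 * R)*s) := by
      apply Real.exp_le_exp.2
      have h4 : (0:ℝ) ≤ Real.sqrt 2 := Real.sqrt_nonneg 2
      have h6 : Real.sqrt 2*s*(-y) ≤ Real.sqrt 2*s*R :=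
        mul_le_mul_of_nonneg_left ((neg_le_abs y).trans hyR) (mul_nonneg h4 hs0.le)
      linarith [h6]
    rw [h25]
    have := mul_le_mul h2 h3 (Real.exp_pos _).le (by positivity)
    linarith [this]
  have hdiff : ∀ᵐ (s : ℝ) ∂(volume.restrict (Ioi (0:ℝ))), ∀ y ∈ Metric.ball r 1,
      HasDerivAt (fun y : ℝ => Complex.exp (-((s:ℂ)+(y:ℂ)*omg)^2)) (F' y s) y := by
    refine Filter.Eventually.of_forall fun s => fun y _ => ?_
    have hc : HasDerivAt (fun w : ℂ => Complex.exp (-(((s:ℂ) + w*omg)^2)))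
        (-2*omg*((s:ℂ)+(y:ℂ)*omg) * Complex.exp (-(((s:ℂ)+(y:ℂ)*omg)^2))) (y:ℂ) := by
      have h1 : HasDerivAt (fun w : ℂ => (s:ℂ) + w*omg) omg (y:ℂ) := by
        simpa using ((hasDerivAt_id ((y:ℝ):ℂ)).mul_const omg).const_add ((s:ℝ):ℂ)
      have h2 := ((h1.fun_pow 2).fun_neg).cexp
      exact h2.congr_deriv (by ring)
    exact hc.comp_ofReal
  have main := hasDerivAt_integral_of_dominated_loc_of_deriv_le (Metric.ball_mem_nhds r h40) hmeas (intF r) h'meas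
    hbnd hbound_int hdiff
  have heq : (∫ s in Ioi (0:ℝ), F' r s) = -omg * Complex.exp (Complex.I * (r:ℂ)^2) := by
    have h1 : ∀ s : ℝ, F' r s
        = omg * ((-2*((s:ℂ)+(r:ℂ)*omg)) * Complex.exp (-((s:ℂ)+(r:ℂ)*omg)^2)) := by
      intro s; rw [hF']; ring
    calc ∫ s in Ioi (0:ℝ), F' r s
        = ∫ s in Ioi (0:ℝ), omg * ((-2*((s:ℂ)+(r:ℂ)*omg)) * Complex.exp (-((s:ℂ)+(r:ℂ)*omg)^2)) :=
          setIntegral_congr_fun measurableSet_Ioi fun s _ => h1 s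
      _ = omg * ∫ s in Ioi (0:ℝ), (-2*((s:ℂ)+(r:ℂ)*omg) * Complex.exp (-((s:ℂ)+(r:ℂ)*omg)^2)) :=
          integral_const_mul _ _
      _ = -omg * Complex.exp (Complex.I * (r:ℂ)^2) := by rw [FTC_Ioi]; ring
  rw [← heq]
  exact main.2

lemma lemA (r : ℝ) :
    ∫ s in Ioi (0:ℝ), Complex.exp (-((s:ℂ) + (r:ℂ)*omg)^2)
      = ((Real.sqrt Real.pi : ℝ) : ℂ)/2
        - omg * ∫ u in (0:ℝ)..r, Complex.exp (Complex.I * (u:ℂ)^2) := by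
  set H : ℝ → ℂ := fun y => (∫ s in Ioi (0:ℝ), Complex.exp (-((s:ℂ)+(y:ℂ)*omg)^2))
      + omg * ∫ u in (0:ℝ)..y, Complex.exp (Complex.I*(u:ℂ)^2) with hH
  have hcont : Continuous fun u : ℝ => Complex.exp (Complex.I*(u:ℂ)^2) := by fun_prop
  have hderiv : ∀ z : ℝ, HasDerivAt H 0 z := by
    intro z
    have h1 := hasDerivF z
    have h2 : HasDerivAt (fun y : ℝ => ∫ u in (0:ℝ)..y, Complex.exp (Complex.I*(u:ℂ)^2))
        (Complex.exp (Complex.I*(z:ℂ)^2)) z :=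
      intervalIntegral.integral_hasDerivAt_right (hcont.intervalIntegrable _ _)
        (hcont.stronglyMeasurable.stronglyMeasurableAtFilter) hcont.continuousAt
    have h3 := h1.add (h2.const_mul omg)
    exact h3.congr_deriv (by ring)
  have hconst : H r = H 0 :=
    is_const_of_deriv_eq_zero (fun z => (hderiv z).differentiableAt) (fun z => (hderiv z).deriv) r 0
  have hH0 : H 0 = ((Real.sqrt Real.pi : ℝ) : ℂ)/2 := by
    rw [hH]
    simp only [intervalIntegral.integral_same, mul_zero, add_zero, Complex.ofReal_zero, zero_mul]
    have h1 : ∀ s : ℝ, Complex.exp (-((s:ℂ))^2) = ((Real.exp (-s^2) : ℝ) : ℂ) := by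
      intro s
      rw [Complex.ofReal_exp]
      congr 1
      push_cast
      ring
    rw [setIntegral_congr_fun measurableSet_Ioi fun s _ => h1 s]
    have hcast : ∫ x in Ioi (0:ℝ), ((Real.exp (-x^2) : ℝ) : ℂ)
        = ((∫ x in Ioi (0:ℝ), Real.exp (-x^2) : ℝ) : ℂ) := integral_ofReal
    rw [hcast]
    have hg := integral_gaussian_Ioi 1
    simp only [neg_one_mul, div_one] at hg
    rw [hg]
    push_cast
    ring
  have : H r = ((Real.sqrt Real.pi : ℝ) : ℂ)/2 := hconst.trans hH0
  rw [hH] at this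
  linear_combination this



lemma intB (x : ℝ) (hx : 0 < x) (b : ℝ) :
    IntegrableOn (fun τ : ℝ =>
      Complex.exp (-(Real.pi:ℂ)*(x:ℂ)*(τ:ℂ)^2 - 2*(Real.pi:ℂ)*(b:ℂ)*omg*(τ:ℂ))) (Ioi (0:ℝ)) := by
  have hre : (0:ℝ) < ((Real.pi:ℂ)*(x:ℂ)).re := by
    have : (Real.pi:ℂ)*(x:ℂ) = ((Real.pi*x : ℝ):ℂ) := by push_cast; ring
    rw [this, Complex.ofReal_re]
    positivity
  have h1 : (fun τ : ℝ => Complex.exp (-(Real.pi:ℂ)*(x:ℂ)*(τ:ℂ)^2 - 2*(Real.pi:ℂ)*(b:ℂ)*omg*(τ:ℂ)))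
      = fun τ : ℝ => Complex.exp (-((Real.pi:ℂ)*(x:ℂ))*(τ:ℂ)^2 + (-2*(Real.pi:ℂ)*(b:ℂ)*omg)*(τ:ℂ) + 0) := by
    funext τ; congr 1; ring
  rw [h1]
  exact (integrable_cexp_quadratic hre _ _).integrableOn

lemma lemB (x : ℝ) (hx : 0 < x) (b : ℝ) :
    ∫ τ in Ioi (0:ℝ),
        Complex.exp (-(Real.pi:ℂ)*(x:ℂ)*(τ:ℂ)^2 - 2*(Real.pi:ℂ)*(b:ℂ)*omg*(τ:ℂ))
      = (1/(2*((Real.sqrt x : ℝ):ℂ))) * Efun x b := by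
  set σ : ℝ := Real.sqrt (Real.pi * x) with hσdef
  set r : ℝ := b * Real.sqrt (Real.pi / x) with hrdef
  have hσ : (0:ℝ) < σ := Real.sqrt_pos.2 (by positivity)
  have hσsq : ((σ:ℝ):ℂ)^2 = (Real.pi:ℂ)*(x:ℂ) := by
    have h0 : σ^2 = Real.pi * x := Real.sq_sqrt (by positivity)
    exact_mod_cast h0
  have hσr : ((σ:ℝ):ℂ)*((r:ℝ):ℂ) = (Real.pi:ℂ)*(b:ℂ) := by
    have h1 : σ * r = Real.pi * b := by
      rw [hσdef, hrdef]
      rw [show Real.sqrt (Real.pi*x) * (b * Real.sqrt (Real.pi/x))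
          = b * (Real.sqrt (Real.pi*x) * Real.sqrt (Real.pi/x)) from by ring]
      rw [← Real.sqrt_mul (by positivity)]
      rw [show Real.pi * x * (Real.pi/x) = Real.pi^2 from by field_simp]
      rw [Real.sqrt_sq Real.pi_pos.le]
      ring
    exact_mod_cast h1
  have hr2 : ((r:ℝ):ℂ)^2 = (b:ℂ)^2*(Real.pi:ℂ)/(x:ℂ) := by
    have h1 : r^2 = b^2 * Real.pi / x := by
      rw [hrdef, mul_pow, Real.sq_sqrt (by positivity : (0:ℝ) ≤ Real.pi / x)]
      field_simp
    exact_mod_cast h1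
  have key : ∀ τ : ℝ, -(Real.pi:ℂ)*(x:ℂ)*(τ:ℂ)^2 - 2*(Real.pi:ℂ)*(b:ℂ)*omg*(τ:ℂ)
      = -(Real.pi:ℂ)*Complex.I*(b:ℂ)^2/(x:ℂ) + (-(((σ*τ : ℝ):ℂ) + ((r:ℝ):ℂ)*omg)^2) := by
    intro τ
    push_cast
    linear_combination (τ:ℂ)^2 * hσsq + 2*(τ:ℂ)*omg * hσr + omg^2 * hr2
      + ((b:ℂ)^2*(Real.pi:ℂ)/(x:ℂ)) * omg_sq
  have step1 : ∫ τ in Ioi (0:ℝ),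
        Complex.exp (-(Real.pi:ℂ)*(x:ℂ)*(τ:ℂ)^2 - 2*(Real.pi:ℂ)*(b:ℂ)*omg*(τ:ℂ))
      = Complex.exp (-(Real.pi:ℂ)*Complex.I*(b:ℂ)^2/(x:ℂ))
        * ∫ τ in Ioi (0:ℝ), Complex.exp (-(((σ*τ : ℝ):ℂ) + ((r:ℝ):ℂ)*omg)^2) := by
    rw [← integral_const_mul]
    refine setIntegral_congr_fun measurableSet_Ioi fun τ _ => ?_
    rw [← Complex.exp_add, key τ]
  have step2 : ∫ τ in Ioi (0:ℝ), Complex.exp (-(((σ*τ : ℝ):ℂ) + ((r:ℝ):ℂ)*omg)^2)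
      = (σ⁻¹ : ℝ) • ∫ s in Ioi (0:ℝ), Complex.exp (-((s:ℂ) + ((r:ℝ):ℂ)*omg)^2) := by
    have := integral_comp_mul_left_Ioi
      (g := fun s : ℝ => Complex.exp (-((s:ℂ) + ((r:ℝ):ℂ)*omg)^2)) 0 hσ
    rw [mul_zero] at this
    exact this
  have hJ : ∫ t in (0:ℝ)..(1:ℝ),
        (omg * (b:ℂ) * ((Real.sqrt (Real.pi/x) : ℝ):ℂ))
          * Complex.exp (-((t:ℂ) * (omg * (b:ℂ) * ((Real.sqrt (Real.pi/x) : ℝ):ℂ)))^2)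
      = omg * ∫ u in (0:ℝ)..r, Complex.exp (Complex.I * (u:ℂ)^2) := by
    have hz : omg * (b:ℂ) * ((Real.sqrt (Real.pi/x) : ℝ):ℂ) = ((r:ℝ):ℂ) * omg := by
      rw [hrdef]; push_cast; ring
    rw [hz]
    have hpt : ∀ t : ℝ, ((r:ℝ):ℂ) * omg * Complex.exp (-((t:ℂ) * (((r:ℝ):ℂ) * omg))^2)
        = ((r:ℝ):ℂ) * (omg * Complex.exp (Complex.I * (((t*r : ℝ)):ℂ)^2)) := by
      intro t
      have : -((t:ℂ) * (((r:ℝ):ℂ) * omg))^2 = Complex.I * (((t*r : ℝ)):ℂ)^2 := by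
        push_cast
        linear_combination (-(t:ℂ)^2*((r:ℝ):ℂ)^2) * omg_sq
      rw [this]
      ring
    rw [intervalIntegral.integral_congr (g := fun t : ℝ =>
      ((r:ℝ):ℂ) * (omg * Complex.exp (Complex.I * (((t*r : ℝ)):ℂ)^2))) (fun t _ => hpt t)]
    rw [intervalIntegral.integral_const_mul, intervalIntegral.integral_const_mul]
    have hsub := intervalIntegral.smul_integral_comp_mul_right
      (f := fun u : ℝ => Complex.exp (Complex.I * (u:ℂ)^2)) (a := (0:ℝ)) (b := (1:ℝ)) r
    rw [zero_mul, one_mul] at hsub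
    have : (∫ t in (0:ℝ)..(1:ℝ), Complex.exp (Complex.I * (((t*r : ℝ)):ℂ)^2))
        = ∫ t in (0:ℝ)..(1:ℝ),
            (fun u : ℝ => Complex.exp (Complex.I * (u:ℂ)^2)) (t * r) := by
      refine intervalIntegral.integral_congr fun t _ => ?_
      push_cast
      ring_nf
    rw [this, ← hsub, Complex.real_smul]
    ring
  rw [step1, step2, lemA r]
  rw [Efun, cerfc, cerf, show Complex.exp (-(Real.pi:ℂ)*Complex.I/4) = omg from rfl, hJ]
  have hσeq : ((σ:ℝ):ℂ) = ((Real.sqrt Real.pi : ℝ):ℂ) * ((Real.sqrt x : ℝ):ℂ) := by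
    rw [hσdef, Real.sqrt_mul Real.pi_pos.le]
    push_cast
    ring
  have hπ : ((Real.sqrt Real.pi : ℝ):ℂ) ≠ 0 :=
    Complex.ofReal_ne_zero.mpr (ne_of_gt (Real.sqrt_pos.2 Real.pi_pos))
  have hx' : ((Real.sqrt x : ℝ):ℂ) ≠ 0 :=
    Complex.ofReal_ne_zero.mpr (ne_of_gt (Real.sqrt_pos.2 hx))
  have main : ∀ W : ℂ, (((σ:ℝ):ℂ))⁻¹ * (((Real.sqrt Real.pi : ℝ):ℂ)/2 - W)
      = 1/(2*((Real.sqrt x : ℝ):ℂ)) * (1 - 2/((Real.sqrt Real.pi : ℝ):ℂ) * W) := by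
    intro W
    rw [hσeq]
    field_simp
  rw [Complex.real_smul, Complex.ofReal_inv, main]
  ring

/-- For `x > 0`, `a > 0` and a positive integer `k`,
`∫_0^∞ e^{-πxτ² - 2πkωτ} sinh(2πaωτ) dτ = (1/(4√x))·(E(k-a) - E(k+a))`. -/
theorem gauss_integral_eval (x a : ℝ) (hx : 0 < x) (ha : 0 < a) (k : ℕ) (hk : 1 ≤ k) :
    (∫ τ in Set.Ioi (0:ℝ),
        Complex.exp (-(Real.pi : ℂ) * (x : ℂ) * (τ : ℂ) ^ 2 - 2 * (Real.pi : ℂ) * (k : ℂ) * omg * (τ : ℂ)) *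
          Complex.sinh (2 * (Real.pi : ℂ) * (a : ℂ) * omg * (τ : ℂ)))
      = (1 / (4 * (Real.sqrt x : ℂ))) * (Efun x ((k : ℝ) - a) - Efun x ((k : ℝ) + a)) := by
  set b1 : ℝ := (k : ℝ) - a with hb1
  set b2 : ℝ := (k : ℝ) + a with hb2
  have hsinh : ∀ τ : ℝ,
      Complex.exp (-(Real.pi : ℂ) * (x : ℂ) * (τ : ℂ) ^ 2 - 2 * (Real.pi : ℂ) * (k : ℂ) * omg * (τ : ℂ)) *
          Complex.sinh (2 * (Real.pi : ℂ) * (a : ℂ) * omg * (τ : ℂ))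
        = (1/2 : ℂ) * Complex.exp (-(Real.pi:ℂ)*(x:ℂ)*(τ:ℂ)^2 - 2*(Real.pi:ℂ)*((b1:ℝ):ℂ)*omg*(τ:ℂ))
          - (1/2 : ℂ) * Complex.exp (-(Real.pi:ℂ)*(x:ℂ)*(τ:ℂ)^2 - 2*(Real.pi:ℂ)*((b2:ℝ):ℂ)*omg*(τ:ℂ)) := by
    intro τ
    rw [Complex.sinh]
    have h1 : Complex.exp (-(Real.pi : ℂ) * (x : ℂ) * (τ : ℂ) ^ 2 - 2 * (Real.pi : ℂ) * (k : ℂ) * omg * (τ : ℂ))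
        * Complex.exp (2 * (Real.pi : ℂ) * (a : ℂ) * omg * (τ : ℂ))
        = Complex.exp (-(Real.pi:ℂ)*(x:ℂ)*(τ:ℂ)^2 - 2*(Real.pi:ℂ)*((b1:ℝ):ℂ)*omg*(τ:ℂ)) := by
      rw [← Complex.exp_add]; congr 1; rw [hb1]; push_cast; ring
    have h2 : Complex.exp (-(Real.pi : ℂ) * (x : ℂ) * (τ : ℂ) ^ 2 - 2 * (Real.pi : ℂ) * (k : ℂ) * omg * (τ : ℂ))
        * Complex.exp (-(2 * (Real.pi : ℂ) * (a : ℂ) * omg * (τ : ℂ)))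
        = Complex.exp (-(Real.pi:ℂ)*(x:ℂ)*(τ:ℂ)^2 - 2*(Real.pi:ℂ)*((b2:ℝ):ℂ)*omg*(τ:ℂ)) := by
      rw [← Complex.exp_add]; congr 1; rw [hb2]; push_cast; ring
    linear_combination h1/2 - h2/2
  rw [setIntegral_congr_fun measurableSet_Ioi fun τ _ => hsinh τ]
  rw [integral_sub ((intB x hx b1).const_mul _) ((intB x hx b2).const_mul _)]
  rw [integral_const_mul, integral_const_mul, lemB x hx b1, lemB x hx b2]
  have hs : ((Real.sqrt x : ℝ):ℂ) ≠ 0 :=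
    Complex.ofReal_ne_zero.mpr (ne_of_gt (Real.sqrt_pos.2 hx))
  field_simp
  ring
end

section
/- For 0 < x < 1, real θ with |θ| ≤ 1/2, and a positive integer N, with f(t) := exp(πixt² + 2πiθt), the integral ∫_0^N f(t) dt equals (e^{πi/4}/(2√x))·{E(θ) - f(N)·E(Nx+θ)}, where E(t) := e^{-πit²/x} erfc(e^{-πi/4} t √(π/x)). -/
open MeasureTheory

/-- `f(t) = exp(πixt² + 2πiθt)` for real `t`. -/
noncomputable def ff (x θ t : ℝ) : ℂ :=
  Complex.exp ((Real.pi : ℂ) * Complex.I * (x : ℂ) * (t : ℂ) ^ 2 +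
    2 * (Real.pi : ℂ) * Complex.I * (θ : ℂ) * (t : ℂ))

/-- Complex-variable version of `Efun`. -/
noncomputable def Ec (x : ℝ) (z : ℂ) : ℂ :=
  Complex.exp (-(Real.pi : ℂ) * Complex.I * z ^ 2 / (x : ℂ)) *
    cerfc (Complex.exp (-(Real.pi : ℂ) * Complex.I / 4) * z * (Real.sqrt (Real.pi / x) : ℂ))

lemma key_deriv (c w : ℂ) : HasDerivAt (fun u : ℂ => u * Complex.exp (-(c*u)^2))
    ((1 - 2*c^2*w^2) * Complex.exp (-(c*w)^2)) w := by
  have h0 : HasDerivAt (fun u:ℂ => c*u) c w := by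
    simpa using (hasDerivAt_id w).const_mul c
  have h1 : HasDerivAt (fun u:ℂ => -(c*u)^2) (-(2*c^2*w)) w := by
    have := (h0.pow 2).neg
    exact this.congr_deriv (by ring)
  have h2 := h1.cexp
  have h3 := (hasDerivAt_id w).mul h2
  exact h3.congr_deriv (by simp only [id_eq]; ring)

lemma hasDerivAt_cerf (z₀ : ℂ) :
    HasDerivAt cerf ((2 / Real.sqrt Real.pi) * Complex.exp (-z₀^2)) z₀ := by
  set F : ℂ → ℝ → ℂ := fun z t => z * Complex.exp (-((t:ℂ)*z)^2) with hF
  set F' : ℂ → ℝ → ℂ := fun z t => (1 - 2*(t:ℂ)^2*z^2) * Complex.exp (-((t:ℂ)*z)^2) with hF'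
  have contF : ∀ z : ℂ, Continuous (F z) := by
    intro z; fun_prop
  have contF' : Continuous (F' z₀) := by fun_prop
  set C : ℝ := (1 + 2*(‖z₀‖+1)^2) * Real.exp ((‖z₀‖+1)^2) with hC
  have h_bound : ∀ t ∈ Set.uIoc (0:ℝ) 1, ∀ z ∈ Metric.ball z₀ 1, ‖F' z t‖ ≤ C := by
    intro t ht z hz
    rw [Set.uIoc_of_le (zero_le_one)] at ht
    have ht0 : 0 < t := ht.1
    have ht1 : t ≤ 1 := ht.2
    have hzb : ‖z‖ ≤ ‖z₀‖ + 1 := by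
      have := mem_ball_iff_norm.mp hz
      calc ‖z‖ = ‖z₀ + (z - z₀)‖ := by ring_nf
        _ ≤ ‖z₀‖ + ‖z - z₀‖ := norm_add_le _ _
        _ ≤ ‖z₀‖ + 1 := by have := norm_sub_rev z z₀ ▸ this; linarith [le_of_lt this]
    have htz : ‖(t:ℂ)*z‖ ≤ ‖z₀‖ + 1 := by
      rw [norm_mul, Complex.norm_real, Real.norm_eq_abs, abs_of_pos ht0]
      calc t * ‖z‖ ≤ 1 * (‖z₀‖+1) := by
            apply mul_le_mul ht1 hzb (norm_nonneg _) zero_le_one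
        _ = ‖z₀‖ + 1 := one_mul _
    have h1 : ‖(1:ℂ) - 2*(t:ℂ)^2*z^2‖ ≤ 1 + 2*(‖z₀‖+1)^2 := by
      calc ‖(1:ℂ) - 2*(t:ℂ)^2*z^2‖ ≤ ‖(1:ℂ)‖ + ‖2*(t:ℂ)^2*z^2‖ := norm_sub_le _ _
        _ = 1 + 2 * ‖(t:ℂ)*z‖^2 := by
            rw [norm_one]; congr 1
            rw [show 2*(t:ℂ)^2*z^2 = 2*((t:ℂ)*z)^2 by ring, norm_mul, norm_pow]
            simp
        _ ≤ 1 + 2*(‖z₀‖+1)^2 := by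
            have : ‖(t:ℂ)*z‖^2 ≤ (‖z₀‖+1)^2 := by
              apply pow_le_pow_left₀ (norm_nonneg _) htz
            linarith
    have h2 : ‖Complex.exp (-((t:ℂ)*z)^2)‖ ≤ Real.exp ((‖z₀‖+1)^2) := by
      rw [Complex.norm_exp]
      apply Real.exp_le_exp.2
      calc (-((t:ℂ)*z)^2).re ≤ ‖(-((t:ℂ)*z)^2)‖ := Complex.re_le_norm _
        _ = ‖(t:ℂ)*z‖^2 := by rw [norm_neg, norm_pow]
        _ ≤ (‖z₀‖+1)^2 := pow_le_pow_left₀ (norm_nonneg _) htz 2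
    calc ‖F' z t‖ = ‖(1:ℂ) - 2*(t:ℂ)^2*z^2‖ * ‖Complex.exp (-((t:ℂ)*z)^2)‖ := norm_mul _ _
      _ ≤ (1 + 2*(‖z₀‖+1)^2) * Real.exp ((‖z₀‖+1)^2) := by
          apply mul_le_mul h1 h2 (norm_nonneg _) (by positivity)
  have h_diff : ∀ t : ℝ, ∀ z ∈ Metric.ball z₀ 1, HasDerivAt (fun z => F z t) (F' z t) z := by
    intro t z hz
    exact key_deriv (t:ℂ) z
  have main := intervalIntegral.hasDerivAt_integral_of_dominated_loc_of_deriv_le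
    (μ := volume) (a := 0) (b := 1)
    (F := F) (F' := F') (x₀ := z₀) (bound := fun _ => C) (Metric.ball_mem_nhds z₀ one_pos)
    (Filter.Eventually.of_forall fun z => (contF z).aestronglyMeasurable)
    ((contF z₀).intervalIntegrable 0 1)
    contF'.aestronglyMeasurable
    (Filter.Eventually.of_forall fun t ht z hz => h_bound t ht z hz)
    (intervalIntegrable_const)
    (Filter.Eventually.of_forall fun t _ z hz => h_diff t z hz)
  have hint : (∫ t in (0:ℝ)..1, F' z₀ t) = Complex.exp (-z₀^2) := by
    have ftc : ∀ t ∈ Set.uIcc (0:ℝ) 1,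
        HasDerivAt (fun s : ℝ => (s:ℂ) * Complex.exp (-((s:ℂ)*z₀)^2)) (F' z₀ t) t := by
      intro t _
      have hc : HasDerivAt (fun u : ℂ => u * Complex.exp (-(z₀*u)^2))
          ((1 - 2*z₀^2*(t:ℂ)^2) * Complex.exp (-(z₀*(t:ℂ))^2)) (t:ℂ) := key_deriv z₀ (t:ℂ)
      have heq : (fun u : ℂ => u * Complex.exp (-(z₀*u)^2))
          = fun u : ℂ => u * Complex.exp (-(u*z₀)^2) := by
        ext u; ring_nf
      rw [heq] at hc
      have := hc.comp_ofReal
      convert this using 1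
      simp only [hF']; ring_nf
    have := intervalIntegral.integral_eq_sub_of_hasDerivAt ftc (contF'.intervalIntegrable 0 1)
    rw [this]
    norm_num
  have : HasDerivAt (fun z => ∫ t in (0:ℝ)..1, F z t) (Complex.exp (-z₀^2)) z₀ := hint ▸ main.2
  have final := this.const_mul ((2 : ℂ) / Real.sqrt Real.pi)
  exact final

lemma hasDerivAt_cerfc (z₀ : ℂ) :
    HasDerivAt cerfc (-((2 / Real.sqrt Real.pi) * Complex.exp (-z₀^2))) z₀ :=
  (hasDerivAt_cerf z₀).const_sub 1

lemma exp_sq_aux : Complex.exp (-(Real.pi:ℂ) * Complex.I / 4) ^ 2 = -Complex.I := by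
  rw [← Complex.exp_nat_mul]
  have : (2:ℕ) * (-(Real.pi:ℂ) * Complex.I / 4) = ((-(Real.pi/2) : ℝ) : ℂ) * Complex.I := by
    push_cast; ring
  rw [this, Complex.exp_mul_I]
  push_cast [← Complex.ofReal_cos, ← Complex.ofReal_sin]
  simp [Real.cos_pi_div_two, Real.sin_pi_div_two]

lemma hasDerivAt_Ec (x : ℝ) (hx : 0 < x) (z : ℂ) :
    HasDerivAt (Ec x)
      (-2 * (Real.pi:ℂ) * Complex.I * z / (x:ℂ) * Ec x z
        - 2 * Complex.exp (-(Real.pi:ℂ) * Complex.I / 4) / (Real.sqrt x : ℂ)) z := by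
  set e : ℂ := Complex.exp (-(Real.pi:ℂ) * Complex.I / 4) with he
  set s : ℂ := (Real.sqrt (Real.pi / x) : ℂ) with hs
  have hxne : (x:ℂ) ≠ 0 := by exact_mod_cast hx.ne'
  have h1 : HasDerivAt (fun z : ℂ => -(Real.pi:ℂ) * Complex.I * z ^ 2 / (x:ℂ))
      (-(Real.pi:ℂ) * Complex.I * (2*z) / (x:ℂ)) z := by
    have := ((hasDerivAt_pow 2 z).const_mul (-(Real.pi:ℂ) * Complex.I)).div_const (x:ℂ)
    exact this.congr_deriv (by ring)
  have h1e := h1.cexp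
  have h2 : HasDerivAt (fun z : ℂ => e * z * s) (e * s) z := by
    have := ((hasDerivAt_id z).const_mul e).mul_const s
    exact this.congr_deriv (by ring)
  have h3 := (hasDerivAt_cerfc (e * z * s)).comp z h2
  have h4 := h1e.mul h3
  have hs2 : s ^ 2 = (Real.pi:ℂ) / (x:ℂ) := by
    rw [hs]
    rw [← Complex.ofReal_pow, Real.sq_sqrt (by positivity : (0:ℝ) ≤ Real.pi / x)]
    push_cast; ring
  have hkey : Complex.exp (-(Real.pi:ℂ) * Complex.I * z ^ 2 / (x:ℂ)) *
      Complex.exp (-(e * z * s)^2) = 1 := by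
    rw [← Complex.exp_add, show -(e*z*s)^2 = -(e^2 * s^2 * z^2) by ring, exp_sq_aux, hs2]
    rw [show -(Real.pi:ℂ) * Complex.I * z ^ 2 / (x:ℂ)
        + -(-Complex.I * ((Real.pi:ℂ)/(x:ℂ)) * z^2) = 0 by field_simp; ring]
    exact Complex.exp_zero
  have hsval : (2 / ((Real.sqrt Real.pi : ℝ) : ℂ)) * s = 2 / (Real.sqrt x : ℂ) := by
    rw [hs, Real.sqrt_div Real.pi_nonneg x]
    have hπ : ((Real.sqrt Real.pi : ℝ) : ℂ) ≠ 0 := by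
      exact_mod_cast (Real.sqrt_pos.2 Real.pi_pos).ne'
    have hxs : ((Real.sqrt x : ℝ) : ℂ) ≠ 0 := by
      exact_mod_cast (Real.sqrt_pos.2 hx).ne'
    push_cast
    field_simp
  refine h4.congr_deriv ?_
  unfold Ec
  rw [← he, ← hs]
  have expand : Complex.exp (-(Real.pi:ℂ) * Complex.I * z ^ 2 / (x:ℂ))
      * (-(2 / (Real.sqrt Real.pi : ℂ) * Complex.exp (-(e * z * s) ^ 2)) * (e * s))
      = -(2 / ((Real.sqrt Real.pi:ℝ) : ℂ)) * s * e := by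
    rw [show Complex.exp (-(Real.pi:ℂ) * Complex.I * z ^ 2 / (x:ℂ))
        * (-(2 / (Real.sqrt Real.pi : ℂ) * Complex.exp (-(e * z * s) ^ 2)) * (e * s))
        = (Complex.exp (-(Real.pi:ℂ) * Complex.I * z ^ 2 / (x:ℂ))
          * Complex.exp (-(e * z * s) ^ 2)) * (-(2 / (Real.sqrt Real.pi : ℂ)) * (e*s)) by ring,
      hkey]
    ring
  simp only [Function.comp_apply]
  rw [expand, show (-(2 / ((Real.sqrt Real.pi:ℝ):ℂ))) * s * e
      = -((2 / ((Real.sqrt Real.pi:ℝ):ℂ)) * s) * e by ring, hsval]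
  ring

lemma hasDerivAt_ff (x θ : ℝ) (u : ℝ) :
    HasDerivAt (fun t : ℝ => ff x θ t)
      ((2*(Real.pi:ℂ)*Complex.I*(x:ℂ)*(u:ℂ) + 2*(Real.pi:ℂ)*Complex.I*(θ:ℂ)) * ff x θ u) u := by
  have hp : HasDerivAt
      (fun w : ℂ => (Real.pi:ℂ)*Complex.I*(x:ℂ)*w^2 + 2*(Real.pi:ℂ)*Complex.I*(θ:ℂ)*w)
      (2*(Real.pi:ℂ)*Complex.I*(x:ℂ)*(u:ℂ) + 2*(Real.pi:ℂ)*Complex.I*(θ:ℂ)) (u:ℂ) := by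
    have h1 := (hasDerivAt_pow 2 (u:ℂ)).const_mul ((Real.pi:ℂ)*Complex.I*(x:ℂ))
    have h2 := (hasDerivAt_id (u:ℂ)).const_mul (2*(Real.pi:ℂ)*Complex.I*(θ:ℂ))
    have := h1.add h2
    exact this.congr_deriv (by ring)
  have := hp.cexp.comp_ofReal
  refine this.congr_deriv ?_
  unfold ff; ring

lemma hasDerivAt_G (x θ : ℝ) (hx : 0 < x) (u : ℝ) :
    HasDerivAt (fun u : ℝ =>
        Complex.exp ((Real.pi:ℂ)*Complex.I/4) / (2 * (Real.sqrt x : ℂ)) *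
          (Ec x (θ:ℂ) - ff x θ u * Ec x ((u:ℂ)*(x:ℂ)+(θ:ℂ))))
      (ff x θ u) u := by
  have hsx : ((Real.sqrt x : ℝ):ℂ) ≠ 0 := by exact_mod_cast (Real.sqrt_pos.2 hx).ne'
  have hsq : ((Real.sqrt x : ℝ):ℂ)^2 = (x:ℂ) := by
    rw [← Complex.ofReal_pow, Real.sq_sqrt hx.le]
  have hxne : (x:ℂ) ≠ 0 := by exact_mod_cast hx.ne'
  have hE : HasDerivAt (fun t : ℝ => Ec x ((t:ℂ)*(x:ℂ)+(θ:ℂ)))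
      ((-2 * (Real.pi:ℂ) * Complex.I * ((u:ℂ)*(x:ℂ)+(θ:ℂ)) / (x:ℂ) * Ec x ((u:ℂ)*(x:ℂ)+(θ:ℂ))
        - 2 * Complex.exp (-(Real.pi:ℂ) * Complex.I / 4) / (Real.sqrt x : ℂ)) * (x:ℂ)) u := by
    have hg : HasDerivAt (fun w : ℂ => w*(x:ℂ)+(θ:ℂ)) (x:ℂ) (u:ℂ) := by
      simpa using ((hasDerivAt_id (u:ℂ)).mul_const (x:ℂ)).add_const (θ:ℂ)
    exact ((hasDerivAt_Ec x hx ((u:ℂ)*(x:ℂ)+(θ:ℂ))).comp (u:ℂ) hg).comp_ofReal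
  have hprod := (hasDerivAt_ff x θ u).mul hE
  have hG := (hprod.const_sub (Ec x (θ:ℂ))).const_mul
      (Complex.exp ((Real.pi:ℂ)*Complex.I/4) / (2 * (Real.sqrt x : ℂ)))
  refine hG.congr_deriv ?_
  have hA : Complex.exp ((Real.pi:ℂ)*Complex.I/4) ≠ 0 := Complex.exp_ne_zero _
  have hBA : Complex.exp (-(Real.pi:ℂ)*Complex.I/4)
      = (Complex.exp ((Real.pi:ℂ)*Complex.I/4))⁻¹ := by
    rw [show -(Real.pi:ℂ)*Complex.I/4 = -((Real.pi:ℂ)*Complex.I/4) by ring, Complex.exp_neg]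
  rw [hBA, ← hsq]
  field_simp
  ring

lemma Efun_eq (x t : ℝ) : Efun x t = Ec x (t:ℂ) := rfl

/-- For `0 < x < 1`, `|θ| ≤ 1/2` and a positive integer `N`,
`∫_0^N f(t) dt = (e^{πi/4}/(2√x))·{E(θ) - f(N)·E(Nx+θ)}`. -/
theorem JN_eval (x θ : ℝ) (hx0 : 0 < x) (hx1 : x < 1) (hθ : |θ| ≤ 1/2)
    (N : ℕ) (hN : 1 ≤ N) :
    (∫ t in (0:ℝ)..(N : ℝ), ff x θ t)
      = Complex.exp ((Real.pi : ℂ) * Complex.I / 4) / (2 * (Real.sqrt x : ℂ)) *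
        (Efun x θ - ff x θ (N : ℝ) * Efun x ((N : ℝ) * x + θ)) := by
  have hcont : Continuous (fun t : ℝ => ff x θ t) := by
    unfold ff; fun_prop
  have := intervalIntegral.integral_eq_sub_of_hasDerivAt
    (f := fun u : ℝ =>
        Complex.exp ((Real.pi:ℂ)*Complex.I/4) / (2 * (Real.sqrt x : ℂ)) *
          (Ec x (θ:ℂ) - ff x θ u * Ec x ((u:ℂ)*(x:ℂ)+(θ:ℂ))))
    (f' := fun t : ℝ => ff x θ t) (a := 0) (b := (N:ℝ))
    (fun u _ => hasDerivAt_G x θ hx0 u)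
    (hcont.intervalIntegrable 0 (N:ℝ))
  rw [this]; beta_reduce
  have hff0 : ff x θ 0 = 1 := by
    unfold ff; norm_num
  have hE0 : Ec x (((0:ℝ):ℂ)*(x:ℂ)+(θ:ℂ)) = Ec x (θ:ℂ) := by
    congr 1; push_cast; ring
  have hEN : Efun x ((N:ℝ)*x+θ) = Ec x ((((N:ℝ)):ℂ)*(x:ℂ)+(θ:ℂ)) := by
    rw [Efun_eq]; congr 1; push_cast; ring
  rw [hff0, hE0, hEN, Efun_eq]
  ring
end
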